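/- Conversely to the sufficiency direction: if X_n = (I_{n,i})_i and X_n' = (I_{n,i}')_i are vectors of independent Bernoulli variables with parameters p_{n,i}, p_{n,i}' and d_TV(X_n, X_n') → 0, then Σ_i ρ(p_{n,i}, p_{n,i}') → 0, where ρ(p,q) = (√p − √q)² + (√(1−p) − √(1−q))². -/

import Mathlib

open Filter

noncomputable def rho (p q : ℝ) : ℝ :=
  (Real.sqrt p - Real.sqrt q) ^ 2 + (Real.sqrt (1 - p) - Real.sqrt (1 - q)) ^ 2

noncomputable def bmass (p : ℝ) (b : Bool) : ℝ := if b then p else 1 - p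

lemma sqrt_prod' {ι : Type*} (s : Finset ι) (f : ι → ℝ) (hf : ∀ i ∈ s, 0 ≤ f i) :
    ∏ i ∈ s, Real.sqrt (f i) = Real.sqrt (∏ i ∈ s, f i) := by
  induction s using Finset.cons_induction with
  | empty => simp
  | cons a s ha ih =>
    rw [Finset.prod_cons, Finset.prod_cons, ih (fun i hi => hf i (Finset.mem_cons_of_mem hi)),
      Real.sqrt_mul (hf a (Finset.mem_cons_self a s))]

lemma bmass_nonneg {p : ℝ} (hp : p ∈ Set.Icc (0:ℝ) 1) (b : Bool) : 0 ≤ bmass p b := by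
  cases b <;> simp [bmass] <;> [linarith [hp.2]; exact hp.1]

lemma sum_prod_bmass {n : ℕ} (q : Fin n → ℝ) :
    ∑ x : Fin n → Bool, ∏ i, bmass (q i) (x i) = 1 := by
  have := Finset.prod_univ_sum (fun _ : Fin n => (Finset.univ : Finset Bool))
    (fun i b => bmass (q i) b)
  rw [Fintype.piFinset_univ] at this
  rw [← this]
  have : ∀ i : Fin n, ∑ b : Bool, bmass (q i) b = 1 := by
    intro i; simp [bmass]
  simp only [this, Finset.prod_const_one]

lemma rho_eq {p q : ℝ} (hp : p ∈ Set.Icc (0:ℝ) 1) (hq : q ∈ Set.Icc (0:ℝ) 1) :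
    rho p q = 2 - 2 * (Real.sqrt (p * q) + Real.sqrt ((1 - p) * (1 - q))) := by
  have h1 : (0:ℝ) ≤ 1 - p := by linarith [hp.2]
  have h2 : (0:ℝ) ≤ 1 - q := by linarith [hq.2]
  rw [rho, Real.sqrt_mul hp.1, Real.sqrt_mul h1]
  have e1 : Real.sqrt p ^ 2 = p := Real.sq_sqrt hp.1
  have e2 : Real.sqrt q ^ 2 = q := Real.sq_sqrt hq.1
  have e3 : Real.sqrt (1 - p) ^ 2 = 1 - p := Real.sq_sqrt h1
  have e4 : Real.sqrt (1 - q) ^ 2 = 1 - q := Real.sq_sqrt h2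
  ring_nf
  nlinarith [e1, e2, e3, e4]

theorem stmt12 (N : ℕ → ℕ) (hN : ∀ n, 1 ≤ N n)
    (p p' : ∀ n, Fin (N n) → ℝ)
    (hp : ∀ n i, p n i ∈ Set.Icc (0:ℝ) 1) (hp' : ∀ n i, p' n i ∈ Set.Icc (0:ℝ) 1)
    (h : Tendsto (fun n => (1 / 2) * ∑ x : Fin (N n) → Bool,
        |(∏ i, bmass (p n i) (x i)) - ∏ i, bmass (p' n i) (x i)|) atTop (nhds 0)) :
    Tendsto (fun n => ∑ i, rho (p n i) (p' n i)) atTop (nhds 0) := by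
  set d : ℕ → ℝ := fun n => (1 / 2) * ∑ x : Fin (N n) → Bool,
      |(∏ i, bmass (p n i) (x i)) - ∏ i, bmass (p' n i) (x i)| with hd
  set S : ℕ → ℝ := fun n => ∑ i, rho (p n i) (p' n i) with hS
  -- nonnegativity of S
  have hSnonneg : ∀ n, 0 ≤ S n := by
    intro n
    apply Finset.sum_nonneg
    intro i _
    rw [rho]
    positivity
  -- key inequality: 1 - d n ≤ exp (-(S n)/2)
  have key : ∀ n, 1 - d n ≤ Real.exp (-(S n) / 2) := by
    intro n
    set a : Fin (N n) → ℝ := fun i =>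
      Real.sqrt (p n i * p' n i) + Real.sqrt ((1 - p n i) * (1 - p' n i)) with ha
    have ha_nonneg : ∀ i, 0 ≤ a i := fun i => by positivity
    -- 1 - d n ≤ ∏ a i
    have hmin : 1 - d n ≤ ∏ i, a i := by
      have hprod : ∏ i, a i = ∑ x : Fin (N n) → Bool,
          ∏ i, Real.sqrt (bmass (p n i) (x i) * bmass (p' n i) (x i)) := by
        have := Finset.prod_univ_sum (fun _ : Fin (N n) => (Finset.univ : Finset Bool))
          (fun i b => Real.sqrt (bmass (p n i) b * bmass (p' n i) b))
        rw [Fintype.piFinset_univ] at this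
        rw [← this]
        apply Finset.prod_congr rfl
        intro i _
        simp [bmass, ha]
      have h1 : ∀ x : Fin (N n) → Bool,
          min (∏ i, bmass (p n i) (x i)) (∏ i, bmass (p' n i) (x i)) ≤
            ∏ i, Real.sqrt (bmass (p n i) (x i) * bmass (p' n i) (x i)) := by
        intro x
        have hP : 0 ≤ ∏ i, bmass (p n i) (x i) :=
          Finset.prod_nonneg fun i _ => bmass_nonneg (hp n i) _
        have hQ : 0 ≤ ∏ i, bmass (p' n i) (x i) :=
          Finset.prod_nonneg fun i _ => bmass_nonneg (hp' n i) _
        rw [sqrt_prod' _ _ (fun i _ => mul_nonneg (bmass_nonneg (hp n i) _)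
          (bmass_nonneg (hp' n i) _)), Finset.prod_mul_distrib]
        set P := ∏ i, bmass (p n i) (x i)
        set Q := ∏ i, bmass (p' n i) (x i)
        have h0 : 0 ≤ min P Q := le_min hP hQ
        calc min P Q = Real.sqrt (min P Q * min P Q) := (Real.sqrt_mul_self h0).symm
          _ ≤ Real.sqrt (P * Q) := Real.sqrt_le_sqrt
              (mul_le_mul (min_le_left _ _) (min_le_right _ _) h0 hP)
      have heq : 1 - d n = ∑ x : Fin (N n) → Bool,
          min (∏ i, bmass (p n i) (x i)) (∏ i, bmass (p' n i) (x i)) := by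
        have hmineq : ∀ a b : ℝ, min a b = (a + b - |a - b|) / 2 := by
          intro a b
          rcases le_total a b with hab | hab
          · rw [min_eq_left hab, abs_of_nonpos (by linarith)]; ring
          · rw [min_eq_right hab, abs_of_nonneg (by linarith)]; ring
        rw [Finset.sum_congr rfl (fun x _ => hmineq _ _)]
        rw [← Finset.sum_div, Finset.sum_sub_distrib, Finset.sum_add_distrib,
          sum_prod_bmass, sum_prod_bmass, hd]
        ring
      rw [heq, hprod]
      exact Finset.sum_le_sum fun x _ => h1 x
    -- ∏ a i ≤ exp (-(S n)/2)
    have hexp : ∏ i, a i ≤ Real.exp (-(S n) / 2) := by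
      calc ∏ i, a i ≤ ∏ i, Real.exp (a i - 1) := by
            apply Finset.prod_le_prod (fun i _ => ha_nonneg i)
            intro i _
            have := Real.add_one_le_exp (a i - 1)
            linarith
        _ = Real.exp (∑ i, (a i - 1)) := by rw [Real.exp_sum]
        _ = Real.exp (-(S n) / 2) := by
            congr 1
            have : ∀ i, a i - 1 = -(rho (p n i) (p' n i)) / 2 := by
              intro i
              have := rho_eq (hp n i) (hp' n i)
              rw [this]; ring
            rw [Finset.sum_congr rfl (fun i _ => this i), hS]
            rw [← Finset.sum_div, ← Finset.sum_neg_distrib]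
    linarith
  -- conclude via squeeze
  have hev : ∀ᶠ n in atTop, d n < 1 / 2 := h.eventually (gt_mem_nhds (by norm_num))
  have hle : ∀ᶠ n in atTop, S n ≤ -2 * Real.log (1 - d n) := by
    filter_upwards [hev] with n hn
    have h1 : (0:ℝ) < 1 - d n := by linarith
    have h2 : Real.log (1 - d n) ≤ -(S n) / 2 :=
      (Real.log_le_iff_le_exp h1).2 (key n)
    linarith
  have hg : Tendsto (fun n => -2 * Real.log (1 - d n)) atTop (nhds 0) := by
    have h1 : Tendsto (fun n => 1 - d n) atTop (nhds 1) := by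
      have := (tendsto_const_nhds (x := (1:ℝ)) (f := atTop)).sub h
      simpa using this
    have h2 : Tendsto (fun n => Real.log (1 - d n)) atTop (nhds 0) := by
      have := (Real.continuousAt_log (by norm_num : (1:ℝ) ≠ 0)).tendsto.comp h1
      simpa [Real.log_one, Function.comp_def] using this
    have := h2.const_mul (-2 : ℝ)
    simpa using this
  exact squeeze_zero' (Eventually.of_forall hSnonneg) hle hg
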